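/- (Sampling gap lower bound of 1/r.) There exists an instance with ground set V = {e}, state space O = {o}, utility f(∅, (e,o)) = 0 and f({e}, (e,o)) = 1, and independence system I = {∅, {e}}, such that f is policywise submodular, and for a random set T containing e with probability r, E_T[f_avg(π*_T)] = r while f_avg(π*_V) = 1; hence f_avg(π*_V) / E_T[f_avg(π*_T)] = 1/r. -/
import Mathlib


open Finset
open scoped Classical

variable {α O : Type*}

/-- An independence system on the (finite) ground type `α`:
a family of subsets containing `∅` and downward closed. -/
def IsIndepSystem [DecidableEq α] (I : Finset (Finset α)) : Prop :=
  ∅ ∈ I ∧ ∀ A ∈ I, ∀ B ⊆ A, B ∈ I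

/-- The restricted family `I^R_S = {A | A ∪ S ∈ I, A ⊆ R}`. -/
def restrFam [Fintype α] [DecidableEq α] (I : Finset (Finset α)) (S R : Finset α) :
    Finset (Finset α) :=
  univ.filter fun A => A ∪ S ∈ I ∧ A ⊆ R

/-- The (upper) rank of a family of sets: the largest cardinality of a member. -/
def rank (I : Finset (Finset α)) : ℕ := I.sup Finset.card

/-- A partial realization: a domain together with observed states on it. -/
structure PReal (α O : Type*) where
  dom : Finset α
  val : α → O

/-- A (full) realization `φ` is consistent with a partial realization `ψ`. -/
def Consistent (φ : α → O) (ψ : PReal α O) : Prop := ∀ e ∈ ψ.dom, φ e = ψ.val e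

/-- `ψ` is a subrealization of `ψ'`. -/
def Subreal (ψ ψ' : PReal α O) : Prop :=
  ψ.dom ⊆ ψ'.dom ∧ ∀ e ∈ ψ.dom, ψ'.val e = ψ.val e

/-- Conditional expectation of `g` given `Φ ∼ ψ`, w.r.t. the prior `p`. -/
noncomputable def cexp [Fintype α] [Fintype O] [DecidableEq α] (p : (α → O) → ℝ)
    (ψ : PReal α O) (g : (α → O) → ℝ) : ℝ :=
  (∑ φ : α → O, if Consistent φ ψ then p φ * g φ else 0) /
    (∑ φ : α → O, if Consistent φ ψ then p φ else 0)

/-- Conditional expected marginal utility `f_avg(π | ψ)` of a policy `π`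
(modelled by the set `π φ` it selects under realization `φ`). -/
noncomputable def margAvg [Fintype α] [DecidableEq α] [Fintype O]
    (f : Finset α → (α → O) → ℝ) (p : (α → O) → ℝ) (ψ : PReal α O)
    (π : (α → O) → Finset α) : ℝ :=
  cexp p ψ fun φ => f (ψ.dom ∪ π φ) φ - f ψ.dom φ

/-- Conditional expected marginal utility `f_avg(e | ψ)` of a single item. -/
noncomputable def itemMarg [Fintype α] [DecidableEq α] [Fintype O]
    (f : Finset α → (α → O) → ℝ) (p : (α → O) → ℝ) (ψ : PReal α O) (e : α) : ℝ :=
  cexp p ψ fun φ => f (insert e ψ.dom) φ - f ψ.dom φ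

/-- `π` is an `I^R_S`-restricted policy. -/
def IsRestricted [Fintype α] [DecidableEq α] [Fintype O] (p : (α → O) → ℝ)
    (I : Finset (Finset α)) (S R : Finset α) (π : (α → O) → Finset α) : Prop :=
  ∀ φ, 0 < p φ → π φ ∈ restrFam I S R

/-- Value of the optimal `I^R_S`-restricted policy on top of `ψ`:
`f_avg(π*(I^R_S, ψ) | ψ)`. -/
noncomputable def optMarg [Fintype α] [DecidableEq α] [Fintype O]
    (f : Finset α → (α → O) → ℝ) (p : (α → O) → ℝ) (I : Finset (Finset α))
    (S R : Finset α) (ψ : PReal α O) : ℝ :=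
  sSup ((fun π => margAvg f p ψ π) '' {π | IsRestricted p I S R π})

/-- Policywise submodularity of `f` w.r.t. the prior `p` and the
independence system `I`. -/
def PolicywiseSubmodular [Fintype α] [DecidableEq α] [Fintype O]
    (f : Finset α → (α → O) → ℝ) (p : (α → O) → ℝ) (I : Finset (Finset α)) : Prop :=
  ∀ ψa ψb : PReal α O, Subreal ψa ψb → ψb.dom ∈ I →
    ∀ R : Finset α, Disjoint R ψb.dom →
      optMarg f p I ψb.dom R ψa ≥ optMarg f p I ψb.dom R ψb

/-- Policy-adaptive submodularity of `f` w.r.t. the prior `p`. -/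
def PolicyAdaptiveSubmodular [Fintype α] [DecidableEq α] [Fintype O]
    (f : Finset α → (α → O) → ℝ) (p : (α → O) → ℝ) : Prop :=
  ∀ ψa ψb : PReal α O, Subreal ψa ψb →
    ∀ π : (α → O) → Finset α, (∀ φ, 0 < p φ → Disjoint (π φ) ψb.dom) →
      margAvg f p ψa π ≥ margAvg f p ψb π

/-- Adaptive submodularity of `f` w.r.t. the prior `p`. -/
def AdaptiveSubmodular [Fintype α] [DecidableEq α] [Fintype O]
    (f : Finset α → (α → O) → ℝ) (p : (α → O) → ℝ) : Prop :=
  ∀ ψa ψb : PReal α O, Subreal ψa ψb → ∀ e ∉ ψb.dom,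
    itemMarg f p ψa e ≥ itemMarg f p ψb e

/-- The (unconditional) expected utility `f_avg(π)` of a policy. -/
noncomputable def favgTot [Fintype α] [Fintype O]
    (f : Finset α → (α → O) → ℝ) (p : (α → O) → ℝ) (π : (α → O) → Finset α) : ℝ :=
  ∑ φ : α → O, p φ * f (π φ) φ

/-- The expected utility `f(∅)` of the empty set. -/
noncomputable def emptyVal [Fintype α] [Fintype O]
    (f : Finset α → (α → O) → ℝ) (p : (α → O) → ℝ) : ℝ :=
  ∑ φ : α → O, p φ * f ∅ φ

/-- `f_avg(π*_R)`: the value of an optimal policy restricted to selecting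
independent sets contained in `R`. -/
noncomputable def optVal [Fintype α] [DecidableEq α] [Fintype O]
    (f : Finset α → (α → O) → ℝ) (p : (α → O) → ℝ) (I : Finset (Finset α))
    (R : Finset α) : ℝ :=
  sSup ((fun π => favgTot f p π) '' {π | IsRestricted p I ∅ R π})

/-- The conditional prior `p(φ | ψ)`. -/
noncomputable def condPrior [Fintype α] [Fintype O] (p : (α → O) → ℝ)
    (ψ : PReal α O) : (α → O) → ℝ :=
  fun φ => if Consistent φ ψ then
    p φ / (∑ φ' : α → O, if Consistent φ' ψ then p φ' else 0) else 0

section Aux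

private lemma consistent_unit (φ : Unit → Unit) (ψ : PReal Unit Unit) :
    Consistent φ ψ := fun e _ => Subsingleton.elim _ _

private lemma cexp_unit (ψ : PReal Unit Unit) (g : (Unit → Unit) → ℝ) :
    cexp (fun _ => (1 : ℝ)) ψ g = g (fun _ => ()) := by
  unfold cexp
  have h : ∀ φ : Unit → Unit, φ = fun _ => () := fun φ => Subsingleton.elim _ _
  simp [consistent_unit, Fintype.sum_unique]

private lemma margAvg_unit (ψ : PReal Unit Unit) (π : (Unit → Unit) → Finset Unit) :
    margAvg (fun S (_ : Unit → Unit) => (S.card : ℝ)) (fun _ => (1 : ℝ)) ψ π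
      = ((ψ.dom ∪ π (fun _ => ())).card : ℝ) - ψ.dom.card := by
  unfold margAvg
  rw [cexp_unit]

private lemma optMarg_unit (S R : Finset Unit) (ψ : PReal Unit Unit) :
    optMarg (fun S (_ : Unit → Unit) => (S.card : ℝ)) (fun _ => (1 : ℝ))
        (univ : Finset (Finset Unit)) S R ψ
      = ((ψ.dom ∪ R).card : ℝ) - ψ.dom.card := by
  unfold optMarg
  apply IsGreatest.csSup_eq
  constructor
  · exact ⟨fun _ => R, by unfold IsRestricted restrFam; simp, margAvg_unit _ _⟩
  · rintro x ⟨π, hπ, rfl⟩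
    beta_reduce
    rw [margAvg_unit]
    have h := hπ (fun _ => ()) one_pos
    rw [restrFam, mem_filter] at h
    have hsub : π (fun _ => ()) ⊆ R := h.2.2
    have : (ψ.dom ∪ π (fun _ => ())).card ≤ (ψ.dom ∪ R).card :=
      card_le_card (union_subset_union_right hsub)
    have h2 : ((ψ.dom ∪ π (fun _ => ())).card : ℝ) ≤ ((ψ.dom ∪ R).card : ℝ) :=
      Nat.cast_le.mpr this
    linarith

private lemma favgTot_unit (π : (Unit → Unit) → Finset Unit) :
    favgTot (fun S (_ : Unit → Unit) => (S.card : ℝ)) (fun _ => (1 : ℝ)) π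
      = ((π (fun _ => ())).card : ℝ) := by
  unfold favgTot
  rw [Fintype.sum_unique]
  simp

private lemma optVal_unit (R : Finset Unit) :
    optVal (fun S (_ : Unit → Unit) => (S.card : ℝ)) (fun _ => (1 : ℝ))
        (univ : Finset (Finset Unit)) R = (R.card : ℝ) := by
  unfold optVal
  apply IsGreatest.csSup_eq
  constructor
  · exact ⟨fun _ => R, by unfold IsRestricted restrFam; simp, favgTot_unit _⟩
  · rintro x ⟨π, hπ, rfl⟩
    beta_reduce
    rw [favgTot_unit]
    have h := hπ (fun _ => ()) one_pos
    rw [restrFam, mem_filter] at h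
    exact_mod_cast card_le_card h.2.2

end Aux

/-- sampling gap lower bound of `1/r`: the single-item instance
`V = {e}`, one state, `f(∅) = 0`, `f({e}) = 1`, `I = {∅, {e}}` is policywise
submodular, `E_T[f_avg(π*_T)] = r` when `Pr[e ∈ T] = r`, `f_avg(π*_V) = 1`, and
hence the ratio is `1/r`. -/
theorem sampling_gap_lower_bound (r : ℝ) (hr0 : 0 ≤ r) (hr1 : r ≤ 1)
    (q : Finset Unit → ℝ) (hq0 : ∀ T, 0 ≤ q T)
    (hq1 : ∑ T : Finset Unit, q T = 1)
    (hqr : ∑ T ∈ univ.filter (fun T : Finset Unit => () ∈ T), q T = r) :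
    PolicywiseSubmodular (fun S (_ : Unit → Unit) => (S.card : ℝ))
        (fun _ => (1 : ℝ)) (univ : Finset (Finset Unit)) ∧
    (∑ T : Finset Unit, q T *
        optVal (fun S (_ : Unit → Unit) => (S.card : ℝ)) (fun _ => (1 : ℝ)) univ T) = r ∧
    optVal (fun S (_ : Unit → Unit) => (S.card : ℝ)) (fun _ => (1 : ℝ)) univ univ = 1 ∧
    (r ≠ 0 →
      optVal (fun S (_ : Unit → Unit) => (S.card : ℝ)) (fun _ => (1 : ℝ)) univ univ /
        (∑ T : Finset Unit, q T *
          optVal (fun S (_ : Unit → Unit) => (S.card : ℝ)) (fun _ => (1 : ℝ)) univ T)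
        = 1 / r) := by
  have hsum : (∑ T : Finset Unit, q T *
      optVal (fun S (_ : Unit → Unit) => (S.card : ℝ)) (fun _ => (1 : ℝ)) univ T) = r := by
    rw [← hqr, sum_filter]
    apply Finset.sum_congr rfl
    intro T _
    rw [optVal_unit]
    have hT : T = ∅ ∨ T = {()} := by
      rcases T.eq_empty_or_nonempty with h | h
      · exact Or.inl h
      · exact Or.inr (Finset.eq_singleton_iff_nonempty_unique_mem.mpr
          ⟨h, fun x _ => Subsingleton.elim _ _⟩)
    rcases hT with rfl | rfl <;> simp
  refine ⟨?_, hsum, ?_, ?_⟩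
  · intro ψa ψb hsub _ R hdis
    rw [ge_iff_le, optMarg_unit, optMarg_unit]
    have hda : Disjoint R ψa.dom := hdis.mono_right hsub.1
    rw [Finset.union_comm ψa.dom, Finset.union_comm ψb.dom,
      card_union_of_disjoint hda, card_union_of_disjoint hdis]
    push_cast; linarith
  · rw [optVal_unit]; simp
  · intro hr
    rw [hsum, optVal_unit]; simp
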